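/- Let d ≥ p ≥ 2, k > p, s ≥ k·d + 1, and let a⃗ = (a_1,…,a_p) be a sequence of positive integers with a_1+⋯+a_p = k. Let H ⊆ binom([n],k) be a hypergraph that contains no (a⃗,d)-Δ-system as a subfamily, and let H* be an s-homogeneous subgraph of H with intersection pattern J. Suppose r(J) = k−1 and J contains exactly k−1 sets of size k−1. Then every E ∈ H* contains a (k−1)-element subset that is not contained in any edge of H other than E; in particular, ω_H(E) ≥ 1 for every E ∈ H*. -/

import Mathlib

open Finset

/-- A Δ-system (sunflower) with center `C`: a family of at least two sets such that
the intersection of any two distinct members equals `C`. -/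
def IsDeltaSystem (D : Finset (Finset ℕ)) (C : Finset ℕ) : Prop :=
  2 ≤ D.card ∧ ∀ A ∈ D, ∀ B ∈ D, A ≠ B → A ∩ B = C

/-- `A : Fin p → Finset ℕ` is an `a⃗`-partition of the set `E`. -/
def IsAPartition (p : ℕ) (a : Fin p → ℕ) (A : Fin p → Finset ℕ) (E : Finset ℕ) : Prop :=
  (∀ i, (A i).card = a i) ∧ (∀ i j, i ≠ j → Disjoint (A i) (A j)) ∧
    Finset.univ.sup A = E

/-- A semi-`(a⃗,b⃗)`-Δ-system with host `E0` and petals `E i j` (`i ∈ [p]`, `j ∈ [b i]`):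
for some `a⃗`-partition `E0 = A 1 ∪ ⋯ ∪ A p`, for each `i` the family
`{E0, E i 1, …, E i (b i)}` is a Δ-system with center `E0 \ A i`. -/
def IsSemiSystem (p : ℕ) (a b : Fin p → ℕ) (E0 : Finset ℕ)
    (E : (i : Fin p) → Fin (b i) → Finset ℕ) : Prop :=
  ∃ A : Fin p → Finset ℕ, IsAPartition p a A E0 ∧
    ∀ i : Fin p,
      (∀ j, E i j ≠ E0) ∧ Function.Injective (E i) ∧
      (∀ j, E0 ∩ E i j = E0 \ A i) ∧
      (∀ j j', j ≠ j' → E i j ∩ E i j' = E0 \ A i)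

/-- An `(a⃗,b⃗)`-Δ-system: a semi-`(a⃗,b⃗)`-Δ-system in which the sets `E i j \ E0`
are pairwise disjoint. -/
def IsABSystem (p : ℕ) (a b : Fin p → ℕ) (E0 : Finset ℕ)
    (E : (i : Fin p) → Fin (b i) → Finset ℕ) : Prop :=
  IsSemiSystem p a b E0 E ∧
    ∀ x y : (i : Fin p) × Fin (b i), x ≠ y →
      Disjoint (E x.1 x.2 \ E0) (E y.1 y.2 \ E0)

/-- The family described by the predicate `Fam` contains an `(a⃗,d)`-Δ-system, i.e. an
`(a⃗,b⃗)`-Δ-system with `b` a sequence of positive integers summing to `d`, all of whose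
members belong to `Fam`. -/
def FamContainsADSystem (p : ℕ) (a : Fin p → ℕ) (d : ℕ) (Fam : Finset ℕ → Prop) : Prop :=
  ∃ b : Fin p → ℕ, (∀ i, 0 < b i) ∧ (∑ i, b i) = d ∧
    ∃ E0, Fam E0 ∧ ∃ E : (i : Fin p) → Fin (b i) → Finset ℕ,
      (∀ i j, Fam (E i j)) ∧ IsABSystem p a b E0 E

/-- The finite family `H` contains an `(a⃗,d)`-Δ-system as a subfamily. -/
def ContainsADSystem (p : ℕ) (a : Fin p → ℕ) (d : ℕ) (H : Finset (Finset ℕ)) : Prop :=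
  FamContainsADSystem p a d (· ∈ H)

/-- A family is `d`-wise-intersecting if every `d` of its members have a common element. -/
def WiseIntersecting (d : ℕ) (F : Finset (Finset ℕ)) : Prop :=
  ∀ f : Fin d → Finset ℕ, (∀ i, f i ∈ F) → ∃ v, ∀ i, v ∈ f i

/-- Non-trivial `d`-wise-intersecting: `d`-wise-intersecting, but no element lies in
all members. -/
def NonTrivialWiseIntersecting (d : ℕ) (F : Finset (Finset ℕ)) : Prop :=
  WiseIntersecting d F ∧ ¬ ∃ v, ∀ A ∈ F, v ∈ A

/-- A family is intersecting if every two members have a nonempty intersection. -/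
def IntersectingFam (F : Finset (Finset ℕ)) : Prop :=
  ∀ A ∈ F, ∀ B ∈ F, (A ∩ B).Nonempty

/-- Non-trivial intersecting: intersecting, but no element lies in all members. -/
def NonTrivialIntersectingFam (F : Finset (Finset ℕ)) : Prop :=
  IntersectingFam F ∧ ¬ ∃ v, ∀ A ∈ F, v ∈ A

/-- The intersection structure `I(E,H) = {E ∩ E' : E' ∈ H \ {E}}`. -/
def interStruct (H : Finset (Finset ℕ)) (E : Finset ℕ) : Finset (Finset ℕ) :=
  (H.erase E).image (fun E' => E ∩ E')

/-- The projection `Π(S) = {i : S ∩ V i ≠ ∅}` with respect to the parts `V`. -/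
def proj {k : ℕ} (V : Fin k → Finset ℕ) (S : Finset ℕ) : Finset (Fin k) :=
  Finset.univ.filter (fun i => (S ∩ V i).Nonempty)

/-- `H ⊆ binom([n],k)` is `s`-homogeneous with intersection pattern
`J ⊆ 2^[k] ∖ {[k]}`: `H` is `k`-partite (with parts partitioning `[n] = Icc 1 n`),
`Π(I(E,H)) = J` for all `E ∈ H`, `J` is closed under intersection, and every set of
`I(E,H)` is the center of a Δ-system of size `s` formed by edges of `H` containing `E`. -/
def IsHomogeneousWith (n k s : ℕ) (H : Finset (Finset ℕ)) (J : Finset (Finset (Fin k))) :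
    Prop :=
  ∃ V : Fin k → Finset ℕ,
    (∀ i j, i ≠ j → Disjoint (V i) (V j)) ∧
    Finset.univ.sup V = Finset.Icc 1 n ∧
    (∀ E ∈ H, ∀ i, (E ∩ V i).card = 1) ∧
    (Finset.univ : Finset (Fin k)) ∉ J ∧
    (∀ E ∈ H, (interStruct H E).image (proj V) = J) ∧
    (∀ A ∈ J, ∀ B ∈ J, A ∩ B ∈ J) ∧
    (∀ E ∈ H, ∀ C ∈ interStruct H E,
      ∃ D : Finset (Finset ℕ), D ⊆ H ∧ E ∈ D ∧ D.card = s ∧ IsDeltaSystem D C)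

/-- The rank `r(J) = min{|A| : A ⊆ [k], A ∉ J, no B ∈ J contains A}`. -/
noncomputable def patternRank {k : ℕ} (J : Finset (Finset (Fin k))) : ℕ :=
  sInf {m : ℕ | ∃ A : Finset (Fin k), A ∉ J ∧ (∀ B ∈ J, ¬ A ⊆ B) ∧ A.card = m}

/-- The `i`-th shadow of a `k`-uniform family: all `(k-i)`-subsets of its edges. -/
def iShadow (k i : ℕ) (H : Finset (Finset ℕ)) : Finset (Finset ℕ) :=
  H.biUnion (fun E => Finset.powersetCard (k - i) E)

/-- `deg_H(E')`: the number of edges of `H` containing `E'`. -/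
def degSet (H : Finset (Finset ℕ)) (E' : Finset ℕ) : ℕ :=
  (H.filter (fun F => E' ⊆ F)).card

/-- The weight `ω_H(E) = Σ_{E' ⊆ E, |E'| = k-1} 1 / deg_H(E')`. -/
noncomputable def weight (k : ℕ) (H : Finset (Finset ℕ)) (E : Finset ℕ) : ℝ :=
  ∑ E' ∈ Finset.powersetCard (k - 1) E, (1 : ℝ) / (degSet H E' : ℝ)

/-- `deg_H(uv)` for a 3-graph: the number of edges containing both `u` and `v`. -/
def deg2 (H : Finset (Finset ℕ)) (u v : ℕ) : ℕ :=
  (H.filter (fun A => u ∈ A ∧ v ∈ A)).card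


section Helpers

/-- If `J` is closed under pairwise intersections and contains all coordinate
complements `univ.erase j` for `j ≠ i₀`, then `J` contains every proper subset
of `univ` containing `i₀`. -/
lemma big_sets_mem {k : ℕ} (J : Finset (Finset (Fin k)))
    (hclosed : ∀ A ∈ J, ∀ B ∈ J, A ∩ B ∈ J) (i₀ : Fin k)
    (hbig : ∀ j : Fin k, j ≠ i₀ → Finset.univ.erase j ∈ J) :
    ∀ c (S : Finset (Fin k)), (Finset.univ \ S).card = c → i₀ ∈ S →
      S ≠ Finset.univ → S ∈ J := by
  intro c
  induction c with
  | zero =>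
    intro S hc hi hne
    rw [Finset.card_eq_zero, Finset.sdiff_eq_empty_iff_subset] at hc
    exact absurd (Finset.univ_subset_iff.mp hc) hne
  | succ c ih =>
    intro S hc hi hne
    have hnonempty : (Finset.univ \ S).Nonempty := by
      rw [← Finset.card_pos, hc]; omega
    obtain ⟨j, hj⟩ := hnonempty
    have hjS : j ∉ S := (Finset.mem_sdiff.mp hj).2
    have hji₀ : j ≠ i₀ := fun h => hjS (h ▸ hi)
    have hcard : (Finset.univ \ insert j S).card = c := by
      rw [Finset.sdiff_insert, Finset.card_erase_of_mem hj, hc]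
      omega
    by_cases h1 : insert j S = Finset.univ
    · have hS : S = Finset.univ.erase j := by
        rw [← h1, Finset.erase_insert hjS]
      rw [hS]; exact hbig j hji₀
    · have hS₁ : insert j S ∈ J := ih (insert j S) hcard (Finset.mem_insert_of_mem hi) h1
      have hmem := hclosed _ hS₁ _ (hbig j hji₀)
      have heq : insert j S ∩ Finset.univ.erase j = S := by
        ext x
        simp only [Finset.mem_inter, Finset.mem_insert, Finset.mem_erase,
          Finset.mem_univ, and_true]
        constructor
        · rintro ⟨h | h, hxj⟩
          · exact absurd h hxj
          · exact h
        · intro hx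
          exact ⟨Or.inr hx, fun h => hjS (h ▸ hx)⟩
      rwa [heq] at hmem

/-- A finset of the right cardinality can be partitioned with prescribed part sizes. -/
lemma exists_partition {ι : Type*} [DecidableEq ι] (T : Finset ι) :
    ∀ (a : ι → ℕ) (X : Finset ℕ), X.card = ∑ i ∈ T, a i →
    ∃ A : ι → Finset ℕ, (∀ i ∈ T, A i ⊆ X) ∧ (∀ i ∈ T, (A i).card = a i) ∧
      (∀ i ∈ T, ∀ j ∈ T, i ≠ j → Disjoint (A i) (A j)) ∧ T.biUnion A = X := by
  induction T using Finset.induction_on with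
  | empty =>
    intro a X hX
    refine ⟨fun _ => ∅, by simp, by simp, by simp, ?_⟩
    simp only [Finset.sum_empty] at hX
    simp [Finset.card_eq_zero.mp hX]
  | @insert i T hiT ih =>
    intro a X hX
    rw [Finset.sum_insert hiT] at hX
    have hle : a i ≤ X.card := by omega
    obtain ⟨B, hBX, hBcard⟩ := Finset.exists_subset_card_eq hle
    have hX' : (X \ B).card = ∑ j ∈ T, a j := by
      rw [Finset.card_sdiff_of_subset hBX, hX, hBcard]; omega
    obtain ⟨A', hA'sub, hA'card, hA'disj, hA'union⟩ := ih a (X \ B) hX'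
    refine ⟨fun j => if j = i then B else A' j, ?_, ?_, ?_, ?_⟩
    · intro j hj
      by_cases h : j = i
      · simpa [h] using hBX
      · simp only [if_neg h]
        exact (hA'sub j (Finset.mem_of_mem_insert_of_ne hj h)).trans
          Finset.sdiff_subset
    · intro j hj
      by_cases h : j = i
      · simpa [h] using hBcard
      · simp only [if_neg h]
        exact hA'card j (Finset.mem_of_mem_insert_of_ne hj h)
    · intro j hj l hl hjl
      dsimp only
      by_cases h : j = i
      · subst h
        have hl' : l ≠ j := fun hli => hjl hli.symm
        rw [if_pos rfl, if_neg hl']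
        have hsub := hA'sub l (Finset.mem_of_mem_insert_of_ne hl hl')
        exact Finset.disjoint_sdiff.mono_right hsub
      · by_cases h' : l = i
        · subst h'
          rw [if_neg h, if_pos rfl]
          have hsub := hA'sub j (Finset.mem_of_mem_insert_of_ne hj h)
          exact (Finset.disjoint_sdiff.mono_right hsub).symm
        · rw [if_neg h, if_neg h']
          exact hA'disj j (Finset.mem_of_mem_insert_of_ne hj h) l
            (Finset.mem_of_mem_insert_of_ne hl h') hjl
    · rw [Finset.biUnion_insert]
      have : T.biUnion (fun j => if j = i then B else A' j) = T.biUnion A' := by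
        apply Finset.biUnion_congr rfl
        intro j hj
        rw [if_neg (fun h : j = i => hiT (by rwa [h] at hj))]
      rw [if_pos rfl, this, hA'union, Finset.union_sdiff_of_subset hBX]

/-- Greedy selection of petals with pairwise disjoint "outside" parts. -/
lemma select_petals {k : ℕ} (hk : 1 ≤ k) {ι : Type*} [DecidableEq ι]
    (out : Finset ℕ → Finset ℕ) :
    ∀ (T : Finset ι) (b : ι → ℕ) (U : Finset ℕ) (G : ι → Finset (Finset ℕ)),
    (∀ i ∈ T, ∀ P ∈ G i, ∀ Q ∈ G i, P ≠ Q → Disjoint (out P) (out Q)) →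
    (∀ i ∈ T, ∀ P ∈ G i, (out P).card ≤ k) →
    (∀ i ∈ T, U.card + (∑ j ∈ T, b j) * k ≤ (G i).card) →
    ∃ S : ι → Finset (Finset ℕ),
      (∀ i ∈ T, S i ⊆ G i) ∧ (∀ i ∈ T, (S i).card = b i) ∧
      (∀ i ∈ T, ∀ P ∈ S i, Disjoint (out P) U) ∧
      (∀ i ∈ T, ∀ j ∈ T, i ≠ j → ∀ P ∈ S i, ∀ Q ∈ S j, Disjoint (out P) (out Q)) := by
  intro T
  induction T using Finset.induction_on with
  | empty =>
    intro b U G _ _ _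
    exact ⟨fun _ => ∅, by simp, by simp, by simp, by simp⟩
  | @insert i T hiT ih =>
    intro b U G hdisj hout hcard
    have hiI : i ∈ insert i T := Finset.mem_insert_self i T
    -- the candidates avoiding U
    set Good := (G i).filter (fun P => Disjoint (out P) U) with hGood
    set Bad := (G i).filter (fun P => ¬ Disjoint (out P) U) with hBad
    have hbadle : Bad.card ≤ U.card := by
      have hch : ∀ P : Finset ℕ, ∃ x, P ∈ Bad → (x ∈ out P ∧ x ∈ U) := by
        intro P
        by_cases h : P ∈ Bad
        · have : ¬ Disjoint (out P) U := (Finset.mem_filter.mp h).2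
          obtain ⟨x, hx1, hx2⟩ := Finset.not_disjoint_iff.mp this
          exact ⟨x, fun _ => ⟨hx1, hx2⟩⟩
        · exact ⟨0, fun hP => absurd hP h⟩
      choose f hf using hch
      apply Finset.card_le_card_of_injOn f
      · intro P hP; exact (hf P hP).2
      · intro P hP Q hQ hPQ
        by_contra hne
        have h1 := (hf P hP).1
        have h2 := (hf Q hQ).1
        have hdis := hdisj i hiI P (Finset.mem_filter.mp hP).1 Q
          (Finset.mem_filter.mp hQ).1 hne
        exact Finset.disjoint_left.mp hdis h1 (hPQ ▸ h2)
    have hgoodcard : (∑ j ∈ insert i T, b j) * k ≤ Good.card := by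
      have hsplit := Finset.card_filter_add_card_filter_not
        (s := G i) (p := fun P => Disjoint (out P) U)
      rw [← hGood, ← hBad] at hsplit
      have := hcard i hiI
      omega
    have hbi : b i ≤ Good.card := by
      have h1 : b i ≤ (∑ j ∈ insert i T, b j) * k :=
        le_trans (Finset.single_le_sum (f := b) (fun _ _ => Nat.zero_le _) hiI)
          (Nat.le_mul_of_pos_right _ hk)
      omega
    obtain ⟨Si, hSiG, hSicard⟩ := Finset.exists_subset_card_eq hbi
    set U' := U ∪ Si.biUnion out with hU'
    have hU'card : U'.card ≤ U.card + b i * k := by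
      have h1 : (Si.biUnion out).card ≤ ∑ P ∈ Si, (out P).card :=
        Finset.card_biUnion_le
      have h2 : ∑ P ∈ Si, (out P).card ≤ ∑ _P ∈ Si, k := by
        apply Finset.sum_le_sum
        intro P hP
        exact hout i hiI P (Finset.mem_filter.mp (hSiG hP)).1
      have h3 : ∑ _P ∈ Si, k = b i * k := by rw [Finset.sum_const, hSicard]; ring
      have h4 : U'.card ≤ U.card + (Si.biUnion out).card := Finset.card_union_le _ _
      omega
    have hT : ∀ j ∈ T, U'.card + (∑ l ∈ T, b l) * k ≤ (G j).card := by
      intro j hj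
      have := hcard j (Finset.mem_insert_of_mem hj)
      rw [Finset.sum_insert hiT] at this
      have : U.card + (b i * k + (∑ l ∈ T, b l) * k) ≤ (G j).card := by
        rw [← Nat.add_mul]; omega
      omega
    obtain ⟨S', hS'G, hS'card, hS'U, hS'cross⟩ :=
      ih b U' G (fun j hj => hdisj j (Finset.mem_insert_of_mem hj))
        (fun j hj => hout j (Finset.mem_insert_of_mem hj)) hT
    refine ⟨fun j => if j = i then Si else S' j, ?_, ?_, ?_, ?_⟩
    · intro j hj
      by_cases h : j = i
      · simp only [h, if_pos rfl]
        exact hSiG.trans (Finset.filter_subset _ _)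
      · simp only [if_neg h]
        exact hS'G j (Finset.mem_of_mem_insert_of_ne hj h)
    · intro j hj
      by_cases h : j = i
      · simp [h, hSicard]
      · simp only [if_neg h]
        exact hS'card j (Finset.mem_of_mem_insert_of_ne hj h)
    · intro j hj P hP
      by_cases h : j = i
      · simp only [h, if_pos rfl] at hP
        exact (Finset.mem_filter.mp (hSiG hP)).2
      · simp only [if_neg h] at hP
        have := hS'U j (Finset.mem_of_mem_insert_of_ne hj h) P hP
        exact this.mono_right Finset.subset_union_left
    · intro j hj l hl hjl P hP Q hQ
      by_cases h : j = i
      · have hl' : l ≠ i := fun hli => hjl (h.trans hli.symm)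
        simp only [h, if_pos rfl] at hP
        simp only [if_neg hl'] at hQ
        have hQU' := hS'U l (Finset.mem_of_mem_insert_of_ne hl hl') Q hQ
        have : out P ⊆ U' := fun x hx =>
          Finset.mem_union_right _ (Finset.mem_biUnion.mpr ⟨P, hP, hx⟩)
        exact (hQU'.mono_right this).symm
      · by_cases h' : l = i
        · simp only [if_neg h] at hP
          simp only [h', if_pos rfl] at hQ
          have hPU' := hS'U j (Finset.mem_of_mem_insert_of_ne hj h) P hP
          have : out Q ⊆ U' := fun x hx =>
            Finset.mem_union_right _ (Finset.mem_biUnion.mpr ⟨Q, hQ, hx⟩)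
          exact hPU'.mono_right this
        · simp only [if_neg h] at hP
          simp only [if_neg h'] at hQ
          exact hS'cross j (Finset.mem_of_mem_insert_of_ne hj h) l
            (Finset.mem_of_mem_insert_of_ne hl h') hjl P hP Q hQ

/-- In a partite hypergraph edge, a subset is determined by its projection. -/
lemma proj_inj_on_subsets {k : ℕ} (V : Fin k → Finset ℕ) (E₀ : Finset ℕ)
    (hE : ∀ i, (E₀ ∩ V i).card = 1) (hcov : ∀ x ∈ E₀, ∃ i, x ∈ V i)
    {C₁ C₂ : Finset ℕ} (h₁ : C₁ ⊆ E₀) (h₂ : C₂ ⊆ E₀)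
    (h : proj V C₁ = proj V C₂) : C₁ = C₂ := by
  have key : ∀ C C' : Finset ℕ, C ⊆ E₀ → C' ⊆ E₀ → proj V C = proj V C' →
      C ⊆ C' := by
    intro C C' hC hC' hpr x hx
    obtain ⟨i, hi⟩ := hcov x (hC hx)
    have hiproj : i ∈ proj V C := by
      simp only [proj, Finset.mem_filter, Finset.mem_univ, true_and]
      exact ⟨x, Finset.mem_inter.mpr ⟨hx, hi⟩⟩
    rw [hpr] at hiproj
    simp only [proj, Finset.mem_filter, Finset.mem_univ, true_and] at hiproj
    obtain ⟨y, hy⟩ := hiproj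
    have hcard := hE i
    rw [Finset.card_eq_one] at hcard
    obtain ⟨z, hz⟩ := hcard
    have hxz : x = z := by
      have : x ∈ E₀ ∩ V i := Finset.mem_inter.mpr ⟨hC hx, hi⟩
      rw [hz] at this; exact Finset.mem_singleton.mp this
    have hyz : y = z := by
      have : y ∈ E₀ ∩ V i := Finset.mem_inter.mpr
        ⟨hC' (Finset.mem_inter.mp hy).1, (Finset.mem_inter.mp hy).2⟩
      rw [hz] at this; exact Finset.mem_singleton.mp this
    rw [hxz, ← hyz]
    exact (Finset.mem_inter.mp hy).1
  exact Finset.Subset.antisymm (key C₁ C₂ h₁ h₂ h) (key C₂ C₁ h₂ h₁ h.symm)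

/-- If the projection of `C ⊆ E₀` lies in `J`, then `C` is an actual intersection. -/
lemma mem_interStruct_of_proj {k : ℕ} (Hs : Finset (Finset ℕ))
    (V : Fin k → Finset ℕ) (J : Finset (Finset (Fin k)))
    (hIJ : ∀ E ∈ Hs, (interStruct Hs E).image (proj V) = J)
    (hpart : ∀ E ∈ Hs, ∀ i, (E ∩ V i).card = 1)
    (hcov : ∀ E ∈ Hs, ∀ x ∈ E, ∃ i, x ∈ V i)
    {E₀ C : Finset ℕ} (hE₀ : E₀ ∈ Hs) (hC : C ⊆ E₀) (hCJ : proj V C ∈ J) :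
    C ∈ interStruct Hs E₀ := by
  rw [← hIJ E₀ hE₀] at hCJ
  obtain ⟨C', hC', hprC'⟩ := Finset.mem_image.mp hCJ
  have hC'sub : C' ⊆ E₀ := by
    simp only [interStruct, Finset.mem_image] at hC'
    obtain ⟨G, _, hG⟩ := hC'
    rw [← hG]
    exact Finset.inter_subset_left
  rwa [proj_inj_on_subsets V E₀ (hpart E₀ hE₀) (hcov E₀ hE₀) hC'sub hC hprC']
    at hC'

end Helpers

/-- Let `d ≥ p ≥ 2`, `k > p`, `s ≥ k·d + 1`, `a⃗` positive with
`Σ a_i = k`. Let `H ⊆ binom([n],k)` contain no `(a⃗,d)`-Δ-system, and let `H*` be an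
`s`-homogeneous subgraph of `H` with pattern `J`, where `r(J) = k-1` and `J` has exactly
`k-1` sets of size `k-1`. Then every `E ∈ H*` has a `(k-1)`-subset contained in no other
edge of `H`; in particular `ω_H(E) ≥ 1` for every `E ∈ H*`. -/
theorem stmt18 (n p k d s : ℕ) (hp : 2 ≤ p) (hpd : p ≤ d) (hpk : p < k)
    (hs : k * d + 1 ≤ s)
    (a : Fin p → ℕ) (ha : ∀ i, 0 < a i) (hsum : ∑ i, a i = k)
    (H Hstar : Finset (Finset ℕ)) (J : Finset (Finset (Fin k)))
    (hH : H ⊆ Finset.powersetCard k (Finset.Icc 1 n))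
    (hfree : ¬ ContainsADSystem p a d H)
    (hsub : Hstar ⊆ H)
    (hhom : IsHomogeneousWith n k s Hstar J)
    (hrank : patternRank J = k - 1)
    (hJ : (J.filter (fun A => A.card = k - 1)).card = k - 1) :
    ∀ E ∈ Hstar,
      (∃ E' ⊆ E, E'.card = k - 1 ∧ ∀ F ∈ H, F ≠ E → ¬ E' ⊆ F) ∧
      (1 : ℝ) ≤ weight k H E := by
  intro E hE
  classical
  obtain ⟨V, hVdisj, hVsup, hVpart, hunivJ, hIJ, hclosed, hdelta⟩ := hhom
  have hk1 : 1 ≤ k := by omega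
  -- basic facts about edges
  have hedge : ∀ F₁ ∈ H, F₁.card = k ∧ F₁ ⊆ Finset.Icc 1 n := by
    intro F₁ h
    have := Finset.mem_powersetCard.mp (hH h)
    exact ⟨this.2, this.1⟩
  have hcov : ∀ F₁ ∈ Hstar, ∀ x ∈ F₁, ∃ i, x ∈ V i := by
    intro F₁ hF₁ x hx
    have hxI : x ∈ Finset.Icc 1 n := (hedge F₁ (hsub hF₁)).2 hx
    rw [← hVsup] at hxI
    obtain ⟨i, _, hi⟩ := Finset.mem_sup.mp hxI
    exact ⟨i, hi⟩
  have hEk : E.card = k := (hedge E (hsub hE)).1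
  -- find the missing coordinate i₀
  have hbigJ : ∃ i₀ : Fin k, ∀ j : Fin k, j ≠ i₀ →
      (Finset.univ : Finset (Fin k)).erase j ∈ J := by
    set Fil := J.filter (fun A => A.card = k - 1) with hFil
    set T0 := (Finset.univ : Finset (Fin k)).image
      (fun j => (Finset.univ : Finset (Fin k)).erase j) with hT0
    have herase_inj : ∀ j₁ j₂ : Fin k,
        (Finset.univ : Finset (Fin k)).erase j₁ = Finset.univ.erase j₂ → j₁ = j₂ := by
      intro j₁ j₂ h
      by_contra hne
      have hmem : j₂ ∈ (Finset.univ : Finset (Fin k)).erase j₁ :=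
        Finset.mem_erase.mpr ⟨fun hh => hne hh.symm, Finset.mem_univ _⟩
      rw [h] at hmem
      exact (Finset.mem_erase.mp hmem).1 rfl
    have hT0card : T0.card = k := by
      rw [hT0, Finset.card_image_of_injOn (fun j₁ _ j₂ _ h => herase_inj j₁ j₂ h),
        Finset.card_univ, Fintype.card_fin]
    have hsubFil : Fil ⊆ T0 := by
      intro A hA
      obtain ⟨hAJ, hAcard⟩ := Finset.mem_filter.mp hA
      have hAsub : A ⊆ Finset.univ := Finset.subset_univ A
      have hd : ((Finset.univ : Finset (Fin k)) \ A).card = 1 := by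
        rw [Finset.card_sdiff_of_subset hAsub, Finset.card_univ, Fintype.card_fin, hAcard]
        omega
      obtain ⟨j, hj⟩ := Finset.card_eq_one.mp hd
      have hAeq : A = (Finset.univ : Finset (Fin k)).erase j := by
        rw [Finset.erase_eq, ← hj, Finset.sdiff_sdiff_eq_self hAsub]
      rw [hT0]
      exact Finset.mem_image.mpr ⟨j, Finset.mem_univ _, hAeq.symm⟩
    have hFilcard : Fil.card = k - 1 := hJ
    have hone : (T0 \ Fil).card = 1 := by
      rw [Finset.card_sdiff_of_subset hsubFil, hT0card, hFilcard]
      omega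
    obtain ⟨M0, hM0⟩ := Finset.card_eq_one.mp hone
    have hM0mem : M0 ∈ T0 \ Fil := hM0 ▸ Finset.mem_singleton_self M0
    obtain ⟨i₀, _, hi₀⟩ := Finset.mem_image.mp (Finset.mem_sdiff.mp hM0mem).1
    refine ⟨i₀, fun j hj => ?_⟩
    have hjT0 : (Finset.univ : Finset (Fin k)).erase j ∈ T0 :=
      Finset.mem_image.mpr ⟨j, Finset.mem_univ _, rfl⟩
    by_cases hjF : (Finset.univ : Finset (Fin k)).erase j ∈ Fil
    · exact (Finset.mem_filter.mp hjF).1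
    · have hmem : (Finset.univ : Finset (Fin k)).erase j ∈ T0 \ Fil :=
        Finset.mem_sdiff.mpr ⟨hjT0, hjF⟩
      rw [hM0] at hmem
      have heq := Finset.mem_singleton.mp hmem
      exact absurd (herase_inj j i₀ (heq.trans hi₀.symm)) hj
  obtain ⟨i₀, hbig⟩ := hbigJ
  have hSJ : ∀ S : Finset (Fin k), i₀ ∈ S → S ≠ Finset.univ → S ∈ J :=
    fun S => big_sets_mem J hclosed i₀ hbig _ S rfl
  -- the special vertex v₀
  obtain ⟨v₀, hv₀⟩ := Finset.card_eq_one.mp (hVpart E hE i₀)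
  have hv₀E : v₀ ∈ E := (Finset.mem_inter.mp (hv₀ ▸ Finset.mem_singleton_self v₀)).1
  have hv₀V : v₀ ∈ V i₀ := (Finset.mem_inter.mp (hv₀ ▸ Finset.mem_singleton_self v₀)).2
  -- projections of proper subsets containing v₀ are in J
  have hprojJ : ∀ E₀ ∈ Hstar, ∀ C₀ ⊆ E₀, v₀ ∈ C₀ → C₀ ≠ E₀ → proj V C₀ ∈ J := by
    intro E₀ hE₀ C₀ hC₀ hv₀C₀ hne
    apply hSJ
    · exact Finset.mem_filter.mpr ⟨Finset.mem_univ _,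
        ⟨v₀, Finset.mem_inter.mpr ⟨hv₀C₀, hv₀V⟩⟩⟩
    · intro hUniv
      apply hne
      apply proj_inj_on_subsets V E₀ (hVpart E₀ hE₀) (hcov E₀ hE₀) hC₀
        (Finset.Subset.refl E₀)
      rw [hUniv]
      exact (Finset.eq_univ_iff_forall.mpr (fun i => Finset.mem_filter.mpr
        ⟨Finset.mem_univ _, Finset.card_pos.mp (by rw [hVpart E₀ hE₀ i]; omega)⟩)).symm
  -- the main claim : E.erase v₀ is in no other edge of H
  have main : ∀ F ∈ H, F ≠ E → ¬ (E.erase v₀) ⊆ F := by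
    intro F hF hFE hEF
    apply hfree
    have hFk : F.card = k := (hedge F hF).1
    have hE'card : (E.erase v₀).card = k - 1 := by
      rw [Finset.card_erase_of_mem hv₀E, hEk]
    -- the extra vertex w of F
    have hFsd : (F \ E.erase v₀).card = 1 := by
      rw [Finset.card_sdiff_of_subset hEF, hFk, hE'card]; omega
    obtain ⟨w, hw⟩ := Finset.card_eq_one.mp hFsd
    have hFeq : F = E.erase v₀ ∪ {w} := by
      rw [← hw, Finset.union_sdiff_of_subset hEF]
    have hwF : w ∈ F := (Finset.mem_sdiff.mp (hw ▸ Finset.mem_singleton_self w)).1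
    have hwE' : w ∉ E.erase v₀ := (Finset.mem_sdiff.mp (hw ▸ Finset.mem_singleton_self w)).2
    have hwE : w ∉ E := by
      intro hwe
      have hwv : w = v₀ := by
        by_contra hne
        exact hwE' (Finset.mem_erase.mpr ⟨hne, hwe⟩)
      apply hFE
      apply Finset.eq_of_subset_of_card_le
      · intro x hx
        rw [hFeq] at hx
        rcases Finset.mem_union.mp hx with h | h
        · exact Finset.mem_of_mem_erase h
        · rw [Finset.mem_singleton.mp h, hwv]; exact hv₀E
      · rw [hFk, hEk]
    -- choose the heavy direction
    have hexi : ∃ i, 2 ≤ a i := by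
      by_contra hcon
      push_neg at hcon
      have hle : ∑ i, a i ≤ ∑ _i : Fin p, 1 :=
        Finset.sum_le_sum (fun i _ => by have := hcon i; omega)
      simp only [Finset.sum_const, Finset.card_univ, Fintype.card_fin, smul_eq_mul,
        mul_one] at hle
      omega
    obtain ⟨istar, histar⟩ := hexi
    have hales : ∀ i, a i ≤ k := by
      intro i
      rw [← hsum]
      exact Finset.single_le_sum (fun j _ => Nat.zero_le (a j)) (Finset.mem_univ i)
    -- choose the core C*
    have hCstarle : k - a istar ≤ (E.erase v₀).card := by rw [hE'card]; omega
    obtain ⟨Cstar, hCstarsub, hCstarcard⟩ :=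
      Finset.exists_subset_card_eq hCstarle
    have hv₀Cstar : v₀ ∉ Cstar := fun h => (Finset.mem_erase.mp (hCstarsub h)).1 rfl
    set C := insert v₀ Cstar with hC
    have hCcard : C.card = k - a istar + 1 := by
      rw [hC, Finset.card_insert_of_notMem hv₀Cstar, hCstarcard]
    have hCsubE : C ⊆ E := by
      rw [hC]
      exact Finset.insert_subset hv₀E (hCstarsub.trans (Finset.erase_subset v₀ E))
    have hCneE : C ≠ E := by
      intro h
      have := hCcard
      rw [h, hEk] at this
      omega
    -- find the host E₀
    have hCJ : proj V C ∈ J :=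
      hprojJ E hE C hCsubE (Finset.mem_insert_self v₀ Cstar) hCneE
    have hCint : C ∈ interStruct Hstar E :=
      mem_interStruct_of_proj Hstar V J hIJ hVpart hcov hE hCsubE hCJ
    obtain ⟨D, hDsub, hED, hDcard, hDdelta⟩ := hdelta E hE C hCint
    have hbadD : ((D.erase E).filter (fun P => w ∈ P)).card ≤ 1 := by
      apply Finset.card_le_one.mpr
      intro P hP Q hQ
      by_contra hPQ
      have hPD := Finset.mem_of_mem_erase (Finset.mem_filter.mp hP).1
      have hQD := Finset.mem_of_mem_erase (Finset.mem_filter.mp hQ).1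
      have hint := hDdelta.2 P hPD Q hQD hPQ
      have hwC : w ∈ C := by
        rw [← hint]
        exact Finset.mem_inter.mpr ⟨(Finset.mem_filter.mp hP).2, (Finset.mem_filter.mp hQ).2⟩
      exact hwE (hCsubE hwC)
    have hgoodD : ((D.erase E).filter (fun P => w ∉ P)).Nonempty := by
      rw [← Finset.card_pos]
      have hsplit : ((D.erase E).filter (fun P => w ∈ P)).card +
          ((D.erase E).filter (fun P => w ∉ P)).card = (D.erase E).card :=
        Finset.card_filter_add_card_filter_not (fun P => w ∈ P)
      have hDE : (D.erase E).card = s - 1 := by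
        rw [Finset.card_erase_of_mem hED, hDcard]
      have hpk2 : 2 * 1 ≤ k * d := Nat.mul_le_mul (by omega) (by omega)
      omega
    obtain ⟨E₀, hE₀good⟩ := hgoodD
    have hE₀D : E₀ ∈ D := Finset.mem_of_mem_erase (Finset.mem_filter.mp hE₀good).1
    have hE₀ne : E₀ ≠ E := (Finset.mem_erase.mp (Finset.mem_filter.mp hE₀good).1).1
    have hwE₀ : w ∉ E₀ := (Finset.mem_filter.mp hE₀good).2
    have hE₀Hs : E₀ ∈ Hstar := hDsub hE₀D
    have hE₀H : E₀ ∈ H := hsub hE₀Hs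
    have hE₀k : E₀.card = k := (hedge E₀ hE₀H).1
    have hE₀E : E₀ ∩ E = C := hDdelta.2 E₀ hE₀D E hED hE₀ne
    have hCsubE₀ : C ⊆ E₀ := by rw [← hE₀E]; exact Finset.inter_subset_left
    have hv₀E₀ : v₀ ∈ E₀ := hCsubE₀ (Finset.mem_insert_self v₀ Cstar)
    have hCstarE₀ : Cstar ⊆ E₀ := fun x hx => hCsubE₀ (Finset.mem_insert_of_mem hx)
    have hv₀F : v₀ ∉ F := by
      intro hvF
      rw [hFeq] at hvF
      rcases Finset.mem_union.mp hvF with h | h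
      · exact (Finset.mem_erase.mp h).1 rfl
      · exact hwE ((Finset.mem_singleton.mp h) ▸ hv₀E)
    have hFneE₀ : F ≠ E₀ := fun h => hv₀F (h ▸ hv₀E₀)
    have hE₀F : E₀ ∩ F = Cstar := by
      ext x
      constructor
      · intro hx
        obtain ⟨hxE₀, hxF⟩ := Finset.mem_inter.mp hx
        rw [hFeq] at hxF
        rcases Finset.mem_union.mp hxF with h | h
        · have hxC : x ∈ C := by
            rw [← hE₀E]
            exact Finset.mem_inter.mpr ⟨hxE₀, Finset.mem_of_mem_erase h⟩
          rcases Finset.mem_insert.mp hxC with h' | h'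
          · exact absurd h' (Finset.mem_erase.mp h).1
          · exact h'
        · exact absurd (Finset.mem_singleton.mp h ▸ hxE₀) hwE₀
      · intro hx
        refine Finset.mem_inter.mpr ⟨hCstarE₀ hx, ?_⟩
        rw [hFeq]
        refine Finset.mem_union_left _ (Finset.mem_erase.mpr ⟨?_, Finset.mem_of_mem_erase (hCstarsub hx)⟩)
        rintro rfl
        exact hv₀Cstar hx
    -- the partition of E₀
    set Tε := (Finset.univ : Finset (Fin p)).erase istar with hTε
    have hsumTε : Cstar.card = ∑ i ∈ Tε, a i := by
      have := Finset.add_sum_erase Finset.univ a (Finset.mem_univ istar)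
      rw [hsum] at this
      rw [hCstarcard, hTε]
      omega
    obtain ⟨A', hA'sub, hA'card, hA'disj, hA'union⟩ := exists_partition Tε a Cstar hsumTε
    set A : Fin p → Finset ℕ := fun i => if i = istar then E₀ \ Cstar else A' i with hA
    have hAistar : A istar = E₀ \ Cstar := by rw [hA]; simp
    have hAmem : ∀ i, i ≠ istar → A i = A' i := by
      intro i hi; rw [hA]; simp [hi]
    have hAsubE₀ : ∀ i, A i ⊆ E₀ := by
      intro i
      by_cases h : i = istar
      · rw [h, hAistar]; exact Finset.sdiff_subset
      · rw [hAmem i h]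
        exact (hA'sub i (Finset.mem_erase.mpr ⟨h, Finset.mem_univ i⟩)).trans hCstarE₀
    have hAcard : ∀ i, (A i).card = a i := by
      intro i
      by_cases h : i = istar
      · rw [h, hAistar, Finset.card_sdiff_of_subset hCstarE₀, hE₀k, hCstarcard]
        have := hales istar
        omega
      · rw [hAmem i h]
        exact hA'card i (Finset.mem_erase.mpr ⟨h, Finset.mem_univ i⟩)
    have hAdisj : ∀ i j, i ≠ j → Disjoint (A i) (A j) := by
      intro i j hij
      by_cases h : i = istar
      · have hj : j ≠ istar := fun hh => hij (h.trans hh.symm)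
        rw [h, hAistar, hAmem j hj]
        exact (Finset.sdiff_disjoint.mono_right
          (hA'sub j (Finset.mem_erase.mpr ⟨hj, Finset.mem_univ j⟩)))
      · by_cases h' : j = istar
        · rw [h', hAistar, hAmem i h]
          exact (Finset.sdiff_disjoint.mono_right
            (hA'sub i (Finset.mem_erase.mpr ⟨h, Finset.mem_univ i⟩))).symm
        · rw [hAmem i h, hAmem j h']
          exact hA'disj i (Finset.mem_erase.mpr ⟨h, Finset.mem_univ i⟩) j
            (Finset.mem_erase.mpr ⟨h', Finset.mem_univ j⟩) hij
    have hAsup : Finset.univ.sup A = E₀ := by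
      rw [Finset.sup_eq_biUnion]
      have huniv : (Finset.univ : Finset (Fin p)) = insert istar Tε := by
        rw [hTε, Finset.insert_erase (Finset.mem_univ istar)]
      rw [huniv, Finset.biUnion_insert, hAistar]
      have hTεbi : Tε.biUnion A = Tε.biUnion A' := by
        apply Finset.biUnion_congr rfl
        intro j hj
        exact hAmem j (Finset.mem_erase.mp hj).1
      rw [hTεbi, hA'union]
      exact Finset.sdiff_union_of_subset hCstarE₀
    have hApart : IsAPartition p a A E₀ := ⟨hAcard, hAdisj, hAsup⟩
    -- the istar center
    have hcenter_istar : E₀ \ A istar = Cstar := by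
      rw [hAistar, Finset.sdiff_sdiff_eq_self hCstarE₀]
    -- delta systems for the other directions
    have hcenters : ∀ i : Fin p, i ≠ istar → ∃ Di : Finset (Finset ℕ),
        Di ⊆ Hstar ∧ E₀ ∈ Di ∧ Di.card = s ∧ IsDeltaSystem Di (E₀ \ A i) := by
      intro i hi
      have hAi : A i = A' i := hAmem i hi
      have hAiE₀ : A i ⊆ E₀ := hAsubE₀ i
      have hAine : (A i).Nonempty := by
        rw [← Finset.card_pos, hAcard i]
        exact ha i
      have hv₀Ai : v₀ ∉ A i := by
        rw [hAi]
        intro h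
        exact hv₀Cstar (hA'sub i (Finset.mem_erase.mpr ⟨hi, Finset.mem_univ i⟩) h)
      have hv₀cen : v₀ ∈ E₀ \ A i := Finset.mem_sdiff.mpr ⟨hv₀E₀, hv₀Ai⟩
      have hcenne : E₀ \ A i ≠ E₀ := by
        intro h
        obtain ⟨x, hx⟩ := hAine
        have : x ∈ E₀ \ A i := h.symm ▸ hAiE₀ hx
        exact (Finset.mem_sdiff.mp this).2 hx
      have hcenJ : proj V (E₀ \ A i) ∈ J :=
        hprojJ E₀ hE₀Hs (E₀ \ A i) Finset.sdiff_subset hv₀cen hcenne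
      have hcenint : E₀ \ A i ∈ interStruct Hstar E₀ :=
        mem_interStruct_of_proj Hstar V J hIJ hVpart hcov hE₀Hs Finset.sdiff_subset hcenJ
      exact hdelta E₀ hE₀Hs (E₀ \ A i) hcenint
    have hcenters' : ∀ i : Fin p, ∃ Di : Finset (Finset ℕ), i ≠ istar →
        (Di ⊆ Hstar ∧ E₀ ∈ Di ∧ Di.card = s ∧ IsDeltaSystem Di (E₀ \ A i)) := by
      intro i
      by_cases h : i = istar
      · exact ⟨∅, fun h' => absurd h h'⟩
      · obtain ⟨Di, hDi⟩ := hcenters i h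
        exact ⟨Di, fun _ => hDi⟩
    choose Dfun hDfun using hcenters'
    set Gfun : Fin p → Finset (Finset ℕ) := fun i => (Dfun i).erase E₀ with hGfun
    -- choose the weights b
    have hp0 : (0 : ℕ) < p := by omega
    have hp1 : (1 : ℕ) < p := by omega
    have hine : (⟨1, hp1⟩ : Fin p) ≠ ⟨0, hp0⟩ := by
      intro h
      simpa using congrArg Fin.val h
    set i₁ : Fin p := if istar = ⟨0, hp0⟩ then ⟨1, hp1⟩ else ⟨0, hp0⟩ with hi₁
    have hi₁ne : i₁ ≠ istar := by
      by_cases h : istar = ⟨0, hp0⟩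
      · rw [hi₁, if_pos h, h]
        exact hine
      · rw [hi₁, if_neg h]
        exact fun hh => h hh.symm
    set b : Fin p → ℕ := fun i => if i = i₁ then d - p + 1 else 1 with hb
    have hbpos : ∀ i, 0 < b i := by
      intro i
      rw [hb]
      by_cases h : i = i₁ <;> simp [h] <;> omega
    have hbsum : ∑ i, b i = d := by
      have h1 : ∑ i, b i = ∑ i : Fin p, (1 + if i = i₁ then d - p else 0) := by
        apply Finset.sum_congr rfl
        intro i _
        rw [hb]
        by_cases h : i = i₁ <;> simp [h] <;> omega
      rw [h1, Finset.sum_add_distrib, Finset.sum_ite_eq' Finset.univ i₁ (fun _ => d - p)]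
      simp only [Finset.sum_const, Finset.card_univ, Fintype.card_fin, smul_eq_mul,
        mul_one, Finset.mem_univ, if_pos]
      omega
    have hbistar : b istar = 1 := by
      have histarne : istar ≠ i₁ := fun h => hi₁ne h.symm
      rw [hb]
      simp [histarne]
    have hbTsum : ∑ j ∈ Tε, b j = d - 1 := by
      have := Finset.add_sum_erase Finset.univ b (Finset.mem_univ istar)
      rw [hbsum, hbistar] at this
      rw [hTε]
      omega
    -- select the petals
    have hGdisj : ∀ i ∈ Tε, ∀ P ∈ Gfun i, ∀ Q ∈ Gfun i, P ≠ Q →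
        Disjoint (P \ E₀) (Q \ E₀) := by
      intro i hi P hP Q hQ hPQ
      have hiz := (Finset.mem_erase.mp hi).1
      obtain ⟨hDsub', hDE₀', hDcard', hDdelta'⟩ := hDfun i hiz
      have hPQint : P ∩ Q = E₀ \ A i :=
        hDdelta'.2 P (Finset.mem_of_mem_erase hP) Q (Finset.mem_of_mem_erase hQ) hPQ
      rw [Finset.disjoint_left]
      intro x hxP hxQ
      have hx : x ∈ P ∩ Q := Finset.mem_inter.mpr
        ⟨(Finset.mem_sdiff.mp hxP).1, (Finset.mem_sdiff.mp hxQ).1⟩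
      rw [hPQint] at hx
      exact (Finset.mem_sdiff.mp hxP).2 (Finset.mem_sdiff.mp hx).1
    have hGout : ∀ i ∈ Tε, ∀ P ∈ Gfun i, (P \ E₀).card ≤ k := by
      intro i hi P hP
      have hiz := (Finset.mem_erase.mp hi).1
      obtain ⟨hDsub', _, _, _⟩ := hDfun i hiz
      have hPH : P ∈ H := hsub (hDsub' (Finset.mem_of_mem_erase hP))
      calc (P \ E₀).card ≤ P.card := Finset.card_le_card Finset.sdiff_subset
        _ = k := (hedge P hPH).1
    have hGcard : ∀ i ∈ Tε, (F \ E₀).card + (∑ j ∈ Tε, b j) * k ≤ (Gfun i).card := by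
      intro i hi
      have hiz := (Finset.mem_erase.mp hi).1
      obtain ⟨_, hDE₀', hDcard', _⟩ := hDfun i hiz
      have hGicard : (Gfun i).card = s - 1 := by
        rw [hGfun]
        simp only
        rw [Finset.card_erase_of_mem hDE₀', hDcard']
      have hFout : (F \ E₀).card ≤ k :=
        le_trans (Finset.card_le_card Finset.sdiff_subset) (le_of_eq hFk)
      rw [hGicard, hbTsum]
      have hdk : k + (d - 1) * k ≤ s - 1 := by
        have h2 : (d - 1) * k + k = d * k := by
          have hd1 : d - 1 + 1 = d := by omega
          calc (d - 1) * k + k = ((d - 1) + 1) * k := by ring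
            _ = d * k := by rw [hd1]
        have h3 : d * k = k * d := Nat.mul_comm d k
        omega
      omega
    obtain ⟨S, hSG, hScard, hSU, hScross⟩ :=
      select_petals hk1 (fun P => P \ E₀) Tε b (F \ E₀) Gfun hGdisj hGout hGcard
    -- assemble the petal families
    set S' : Fin p → Finset (Finset ℕ) := fun i => if i = istar then {F} else S i with hS'
    have hS'card : ∀ i, (S' i).card = b i := by
      intro i
      by_cases h : i = istar
      · rw [hS']; simp [h, hbistar, h ▸ hbistar]
      · rw [hS']
        simp only [if_neg h]
        exact hScard i (Finset.mem_erase.mpr ⟨h, Finset.mem_univ i⟩)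
    have hS'facts : ∀ i, ∀ P ∈ S' i, P ∈ H ∧ P ≠ E₀ ∧ E₀ ∩ P = E₀ \ A i := by
      intro i P hP
      by_cases h : i = istar
      · rw [hS'] at hP
        simp only [if_pos h] at hP
        have hPF : P = F := Finset.mem_singleton.mp hP
        subst hPF
        rw [h, hcenter_istar]
        exact ⟨hF, hFneE₀, hE₀F⟩
      · rw [hS'] at hP
        simp only [if_neg h] at hP
        have hiT : i ∈ Tε := Finset.mem_erase.mpr ⟨h, Finset.mem_univ i⟩
        have hPG : P ∈ Gfun i := hSG i hiT hP
        obtain ⟨hDsub', hDE₀', _, hDdelta'⟩ := hDfun i h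
        have hPD : P ∈ Dfun i := Finset.mem_of_mem_erase hPG
        refine ⟨hsub (hDsub' hPD), (Finset.mem_erase.mp hPG).1, ?_⟩
        exact hDdelta'.2 E₀ hDE₀' P hPD (fun hh => (Finset.mem_erase.mp hPG).1 hh.symm)
    have hS'pair : ∀ i, ∀ P ∈ S' i, ∀ Q ∈ S' i, P ≠ Q → P ∩ Q = E₀ \ A i := by
      intro i P hP Q hQ hPQ
      by_cases h : i = istar
      · rw [hS'] at hP hQ
        simp only [if_pos h] at hP hQ
        exact absurd ((Finset.mem_singleton.mp hP).trans
          (Finset.mem_singleton.mp hQ).symm) hPQ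
      · rw [hS'] at hP hQ
        simp only [if_neg h] at hP hQ
        have hiT : i ∈ Tε := Finset.mem_erase.mpr ⟨h, Finset.mem_univ i⟩
        obtain ⟨hDsub', hDE₀', _, hDdelta'⟩ := hDfun i h
        exact hDdelta'.2 P (Finset.mem_of_mem_erase (hSG i hiT hP)) Q
          (Finset.mem_of_mem_erase (hSG i hiT hQ)) hPQ
    have hS'crossdisj : ∀ i j, i ≠ j → ∀ P ∈ S' i, ∀ Q ∈ S' j,
        Disjoint (P \ E₀) (Q \ E₀) := by
      intro i j hij P hP Q hQ
      by_cases h : i = istar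
      · subst h
        have hj : j ≠ i := fun hh => hij hh.symm
        rw [hS'] at hP hQ
        simp only [if_pos rfl] at hP
        simp only [if_neg hj] at hQ
        have hPF : P = F := Finset.mem_singleton.mp hP
        subst hPF
        have hjT : j ∈ Tε := Finset.mem_erase.mpr ⟨hj, Finset.mem_univ j⟩
        exact (hSU j hjT Q hQ).symm
      · by_cases h' : j = istar
        · subst h'
          rw [hS'] at hP hQ
          simp only [if_pos rfl] at hQ
          simp only [if_neg h] at hP
          have hQF : Q = F := Finset.mem_singleton.mp hQ
          subst hQF
          have hiT : i ∈ Tε := Finset.mem_erase.mpr ⟨h, Finset.mem_univ i⟩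
          exact hSU i hiT P hP
        · rw [hS'] at hP hQ
          simp only [if_neg h] at hP
          simp only [if_neg h'] at hQ
          exact hScross i (Finset.mem_erase.mpr ⟨h, Finset.mem_univ i⟩) j
            (Finset.mem_erase.mpr ⟨h', Finset.mem_univ j⟩) hij P hP Q hQ
    -- the petal functions
    set Efun : (i : Fin p) → Fin (b i) → Finset ℕ :=
      fun i j => ((S' i).equivFin.symm (Fin.cast (hS'card i).symm j) : Finset ℕ) with hEfun
    have hEfunmem : ∀ i j, Efun i j ∈ S' i := by
      intro i j
      exact Finset.coe_mem _
    have hEfuninj : ∀ i, Function.Injective (Efun i) := by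
      intro i j j' hjj
      have h1 := (S' i).equivFin.symm.injective (Subtype.ext hjj)
      exact Fin.ext (by simpa using congrArg Fin.val h1)
    refine ⟨b, hbpos, hbsum, E₀, hE₀H, Efun, ?_, ?_, ?_⟩
    · intro i j
      exact (hS'facts i _ (hEfunmem i j)).1
    · refine ⟨A, hApart, fun i => ⟨?_, hEfuninj i, ?_, ?_⟩⟩
      · intro j
        exact (hS'facts i _ (hEfunmem i j)).2.1
      · intro j
        exact (hS'facts i _ (hEfunmem i j)).2.2
      · intro j j' hjj
        exact hS'pair i _ (hEfunmem i j) _ (hEfunmem i j') (fun hh => hjj (hEfuninj i hh))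
    · rintro ⟨i, ji⟩ ⟨l, jl⟩ hxy
      dsimp only
      by_cases h : i = l
      · subst h
        have hne : ji ≠ jl := by
          intro hh
          exact hxy (by rw [hh])
        by_cases h' : i = istar
        · exfalso
          apply hne
          have h1 : b i = 1 := by rw [h']; exact hbistar
          have h2 := ji.isLt
          have h3 := jl.isLt
          exact Fin.ext (by omega)
        · have hiT : i ∈ Tε := Finset.mem_erase.mpr ⟨h', Finset.mem_univ i⟩
          have hPQ : Efun i ji ≠ Efun i jl := fun hh => hne (hEfuninj i hh)
          have hP : Efun i ji ∈ S i := by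
            have := hEfunmem i ji
            rw [hS'] at this
            simpa only [if_neg h'] using this
          have hQ : Efun i jl ∈ S i := by
            have := hEfunmem i jl
            rw [hS'] at this
            simpa only [if_neg h'] using this
          exact hGdisj i hiT _ (hSG i hiT hP) _ (hSG i hiT hQ) hPQ
      · exact hS'crossdisj i l h _ (hEfunmem i ji) _ (hEfunmem l jl)
  -- conclude
  have hE'sub : E.erase v₀ ⊆ E := Finset.erase_subset v₀ E
  have hE'card : (E.erase v₀).card = k - 1 := by
    rw [Finset.card_erase_of_mem hv₀E, hEk]
  refine ⟨⟨E.erase v₀, hE'sub, hE'card, main⟩, ?_⟩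
  -- the weight bound
  have hE'mem : E.erase v₀ ∈ Finset.powersetCard (k - 1) E :=
    Finset.mem_powersetCard.mpr ⟨hE'sub, hE'card⟩
  have hdeg : degSet H (E.erase v₀) = 1 := by
    unfold degSet
    rw [Finset.card_eq_one]
    refine ⟨E, ?_⟩
    ext F
    simp only [Finset.mem_filter, Finset.mem_singleton]
    constructor
    · rintro ⟨hFH, hFE'⟩
      by_contra hne
      exact main F hFH hne hFE'
    · rintro rfl
      exact ⟨hsub hE, hE'sub⟩
  have hsum1 := Finset.single_le_sum
    (f := fun E' => (1 : ℝ) / (degSet H E' : ℝ))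
    (fun i _ => by positivity) hE'mem
  unfold weight
  refine le_trans (le_of_eq ?_) hsum1
  show (1 : ℝ) = 1 / ((degSet H (E.erase v₀) : ℕ) : ℝ)
  rw [hdeg]
  norm_num
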